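/- Let f(x) = e^x (e^x − K)⁺ for K > 0 (self-quanto call payoff). For z ∈ ℂ with Im z ∈ (2, ∞), the Fourier transform ∫_ℝ e^{izx} f(x) dx exists and equals K^{2+iz} / ((1+iz)(2+iz)). -/

import Mathlib

open MeasureTheory Complex

lemma integrableOn_cexp_Ioi' {c : ℂ} (hc : c.re < 0) (a : ℝ) :
    MeasureTheory.IntegrableOn (fun x : ℝ => Complex.exp (c * x)) (Set.Ioi a) := by
  have hg := exp_neg_integrableOn_Ioi a (neg_pos.mpr hc)
  refine hg.mono' ?_ ?_
  · exact (Complex.continuous_exp.comp (continuous_const.mul Complex.continuous_ofReal)).aestronglyMeasurable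
  · filter_upwards with x
    rw [Complex.norm_exp]
    simp [Complex.mul_re, neg_mul]

lemma hasDerivAt_cexp_div {c : ℂ} (hc : c ≠ 0) (x : ℝ) :
    HasDerivAt (fun y : ℝ => Complex.exp (c * y) / c) (Complex.exp (c * x)) x := by
  rw [← mul_div_cancel_right₀ (Complex.exp (c * x)) hc]
  apply ((Complex.hasDerivAt_exp _).comp x _).div_const c
  simpa only [mul_one, id] using ((hasDerivAt_id (x : ℂ)).const_mul _).comp_ofReal

lemma integral_cexp_Ioi' {c : ℂ} (hc : c.re < 0) (a : ℝ) :
    ∫ x in Set.Ioi a, Complex.exp (c * x) = -(Complex.exp (c * a) / c) := by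
  have hc0 : c ≠ 0 := fun h => by simp [h] at hc
  have htend : Filter.Tendsto (fun x : ℝ => Complex.exp (c * x) / c)
      Filter.atTop (nhds 0) := by
    rw [tendsto_zero_iff_norm_tendsto_zero]
    have : (fun x : ℝ => ‖Complex.exp (c * x) / c‖) =
        fun x : ℝ => Real.exp (c.re * x) / ‖c‖ := by
      funext x
      rw [norm_div, Complex.norm_exp]
      simp [Complex.mul_re]
    rw [this]
    have h0 : Filter.Tendsto (fun x : ℝ => Real.exp (c.re * x)) Filter.atTop (nhds 0) :=
      Real.tendsto_exp_atBot.comp (Filter.tendsto_id.const_mul_atTop_of_neg hc)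
    simpa using h0.div_const ‖c‖
  have := integral_Ioi_of_hasDerivAt_of_tendsto'
    (f := fun y : ℝ => Complex.exp (c * y) / c) (m := 0)
    (fun x _ => hasDerivAt_cexp_div hc0 x) (integrableOn_cexp_Ioi' hc a) htend
  rw [this]; ring

/-- Fourier transform of the self-quanto call payoff `f(x) = e^x (e^x - K)⁺`, `K > 0`:
for `z ∈ ℂ` with `Im z ∈ (2,∞)`, `∫_ℝ e^{izx} f(x) dx` exists and equals
`K^{2+iz}/((1+iz)(2+iz))`. -/
theorem fourier_self_quanto (K : ℝ) (hK : 0 < K) (z : ℂ) (hz : 2 < z.im) :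
    Integrable (fun x : ℝ =>
      Complex.exp (Complex.I * z * x) * ((Real.exp x * max (Real.exp x - K) 0 : ℝ) : ℂ))
      (volume : Measure ℝ) ∧
    ∫ x : ℝ, Complex.exp (Complex.I * z * x) *
        ((Real.exp x * max (Real.exp x - K) 0 : ℝ) : ℂ) =
      Complex.exp ((2 + Complex.I * z) * Real.log K) /
        ((1 + Complex.I * z) * (2 + Complex.I * z)) := by
  set c₁ : ℂ := 1 + Complex.I * z with hc₁def
  set c₂ : ℂ := 2 + Complex.I * z with hc₂def
  have hc₁re : c₁.re < 0 := by
    simp only [hc₁def, Complex.add_re, Complex.one_re, Complex.mul_re, Complex.I_re,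
      Complex.I_im]
    linarith
  have hc₂re : c₂.re < 0 := by
    have : (2 : ℂ).re = 2 := by norm_num
    simp only [hc₂def, Complex.add_re, this, Complex.mul_re, Complex.I_re, Complex.I_im]
    linarith
  have hc₁0 : c₁ ≠ 0 := fun h => by simp [h] at hc₁re
  have hc₂0 : c₂ ≠ 0 := fun h => by simp [h] at hc₂re
  set a : ℝ := Real.log K with ha
  set g : ℝ → ℂ := fun x => Complex.exp (c₂ * x) - K * Complex.exp (c₁ * x) with hg
  have hF : (fun x : ℝ => Complex.exp (Complex.I * z * x) *
      ((Real.exp x * max (Real.exp x - K) 0 : ℝ) : ℂ)) = Set.indicator (Set.Ioi a) g := by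
    funext x
    by_cases hx : a < x
    · rw [Set.indicator_of_mem (Set.mem_Ioi.mpr hx)]
      have hxK : K < Real.exp x := by
        rw [ha] at hx
        calc K = Real.exp (Real.log K) := (Real.exp_log hK).symm
        _ < Real.exp x := Real.exp_lt_exp.mpr hx
      rw [max_eq_left (by linarith)]
      rw [hg]
      push_cast
      rw [hc₂def, hc₁def,
        show (2 + Complex.I * z) * (x : ℂ) = Complex.I * z * x + ((x : ℂ) + x) by ring,
        show (1 + Complex.I * z) * (x : ℂ) = Complex.I * z * x + x by ring,
        Complex.exp_add, Complex.exp_add, Complex.exp_add]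
      ring
    · rw [Set.indicator_of_notMem (by simpa using hx)]
      have hxK : Real.exp x ≤ K := by
        rw [ha, not_lt] at hx
        calc Real.exp x ≤ Real.exp (Real.log K) := Real.exp_le_exp.mpr hx
        _ = K := Real.exp_log hK
      rw [max_eq_right (by linarith)]
      simp
  have hint : IntegrableOn g (Set.Ioi a) :=
    (integrableOn_cexp_Ioi' hc₂re a).sub ((integrableOn_cexp_Ioi' hc₁re a).const_mul _)
  have hintF : Integrable (fun x : ℝ => Complex.exp (Complex.I * z * x) *
      ((Real.exp x * max (Real.exp x - K) 0 : ℝ) : ℂ)) volume := by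
    rw [hF]
    rwa [integrable_indicator_iff measurableSet_Ioi]
  refine ⟨hintF, ?_⟩
  rw [hF, integral_indicator measurableSet_Ioi]
  have hsplit : ∫ x in Set.Ioi a, g x =
      (∫ x in Set.Ioi a, Complex.exp (c₂ * x)) -
        K * ∫ x in Set.Ioi a, Complex.exp (c₁ * x) := by
    rw [integral_sub (integrableOn_cexp_Ioi' hc₂re a)
      ((integrableOn_cexp_Ioi' hc₁re a).const_mul _), integral_const_mul]
  rw [hsplit, integral_cexp_Ioi' hc₂re, integral_cexp_Ioi' hc₁re]
  have hKc : (K : ℂ) * Complex.exp (c₁ * a) = Complex.exp (c₂ * a) := by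
    have : (K : ℂ) = Complex.exp (a : ℂ) := by
      rw [← Complex.ofReal_exp, ha, Real.exp_log hK]
    rw [this, ← Complex.exp_add]
    congr 1
    rw [hc₁def, hc₂def]; ring
  rw [mul_neg, ← mul_div_assoc, hKc]
  have hnum : Complex.exp ((2 + Complex.I * z) * (Real.log K : ℂ)) =
      Complex.exp (c₂ * a) := by rw [hc₂def, ha]
  rw [hnum]
  field_simp
  ring
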